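/- arXiv:2306.13560 — 3 statements merged into one kernel-verified Lean document; each statement's English description precedes it below -/
import Mathlib

section
/- Let d ≥ 1 and n ≥ d+2. Define a partial order on the (d+1)-element subsets of {1,…,n} by: A ≤ B if and only if for every 1 ≤ i ≤ d+1 the i-th smallest element of A is at most the i-th smallest element of B. Let T = ({1,…,d+1} \ {2}) ∪ {n} (the set with increasing enumeration 1, 3, 4, …, d+1, n). Then the collection of (d+1)-element subsets A of {1,…,n} with A ≤ T is exactly the set Λ_d of d-simplices of the LGRC, and in particular it has cardinality d(n−d−1)+1 = d·n − (d²+d−1). -/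
/-- The set `Λ_d` of `d`-simplices of the lexicographically greedy rigid complex (LGRC)
on vertex set `{1, …, n}`: the simplex `{1, …, d+1}` together with all sets
`{1} ∪ S ∪ {j}` where `S` is a `(d-1)`-element subset of `{2, …, d+1}` and `d+2 ≤ j ≤ n`. -/
def LGRC (d n : ℕ) : Finset (Finset ℕ) :=
  insert (Finset.Icc 1 (d + 1))
    (((Finset.Icc (d + 2) n) ×ˢ ((Finset.Icc 2 (d + 1)).powersetCard (d - 1))).image
      fun x => insert 1 (insert x.1 x.2))

/-- The componentwise partial order on `(d+1)`-element subsets of `ℕ`: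
`A ≤ B` iff for every `j`, the `(j+1)`-st smallest element of `A` is at most the
`(j+1)`-st smallest element of `B`. -/
def simplexLE (d : ℕ) (A B : Finset ℕ) : Prop :=
  ∀ j < d + 1, (A.sort (· ≤ ·)).getD j 0 ≤ (B.sort (· ≤ ·)).getD j 0

instance (d : ℕ) (A B : Finset ℕ) : Decidable (simplexLE d A B) := by
  unfold simplexLE; infer_instance

/- ### Auxiliary lemmas -/

lemma getD_mem_of_lt {s : Finset ℕ} {i : ℕ} (hi : i < s.card) :
    (s.sort (· ≤ ·)).getD i 0 ∈ s := by
  have hl : i < (s.sort (· ≤ ·)).length := by rwa [Finset.length_sort]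
  rw [List.getD_eq_getElem _ _ hl]
  exact (Finset.mem_sort (· ≤ ·)).1 (List.getElem_mem _)

lemma mem_eq_getD {s : Finset ℕ} {x : ℕ} (hx : x ∈ s) :
    ∃ j, j < s.card ∧ (s.sort (· ≤ ·)).getD j 0 = x := by
  have hx' : x ∈ s.sort (· ≤ ·) := (Finset.mem_sort (· ≤ ·)).2 hx
  obtain ⟨i, hi, he⟩ := List.mem_iff_getElem.1 hx'
  refine ⟨i, by rwa [Finset.length_sort] at hi, ?_⟩
  rw [List.getD_eq_getElem _ _ hi, he]

lemma sorted_getD_add {s : Finset ℕ} :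
    ∀ j, j < s.card → ∀ i, i ≤ j →
      (s.sort (· ≤ ·)).getD i 0 + (j - i) ≤ (s.sort (· ≤ ·)).getD j 0 := by
  intro j
  induction j with
  | zero =>
    intro _ i hi
    interval_cases i
    simp
  | succ j ih =>
    intro hj i hi
    rcases Nat.eq_or_lt_of_le hi with rfl | hi'
    · simp
    · have h1 := ih (by omega) i (by omega)
      have hlen : j + 1 < (s.sort (· ≤ ·)).length := by rwa [Finset.length_sort]
      have h2 : (s.sort (· ≤ ·)).getD j 0 < (s.sort (· ≤ ·)).getD (j + 1) 0 := by
        rw [List.getD_eq_getElem _ _ (by omega), List.getD_eq_getElem _ _ hlen]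
        exact List.Pairwise.rel_get_of_lt (s.sortedLT_sort.pairwise) (by simp)
      omega

lemma getD_bounds {s : Finset ℕ} {a b k i : ℕ} (hs : s ⊆ Finset.Icc a b)
    (hcard : s.card = k) (hi : i < k) :
    a + i ≤ (s.sort (· ≤ ·)).getD i 0 ∧ (s.sort (· ≤ ·)).getD i 0 + (k - 1 - i) ≤ b := by
  have h0 : a ≤ (s.sort (· ≤ ·)).getD 0 0 :=
    (Finset.mem_Icc.1 (hs (getD_mem_of_lt (by omega)))).1
  have hk : (s.sort (· ≤ ·)).getD (k - 1) 0 ≤ b :=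
    (Finset.mem_Icc.1 (hs (getD_mem_of_lt (by omega)))).2
  have h1 := sorted_getD_add (s := s) i (by omega) 0 (by omega)
  have h2 := sorted_getD_add (s := s) (k - 1) (by omega) i (by omega)
  omega

lemma sort_insert_top {a : ℕ} {s : Finset ℕ} (h : ∀ b ∈ s, b < a) :
    (insert a s).sort (· ≤ ·) = s.sort (· ≤ ·) ++ [a] := by
  have hns : a ∉ s := fun hmem => lt_irrefl a (h a hmem)
  have hperm : List.Perm ((insert a s).sort (· ≤ ·)) (s.sort (· ≤ ·) ++ [a]) := by
    have p1 : List.Perm ((insert a s).sort (· ≤ ·)) (insert a s).toList :=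
      Finset.sort_perm_toList _ _
    have p2 := Finset.toList_insert hns
    have p3 : List.Perm (a :: s.toList) (a :: s.sort (· ≤ ·)) :=
      List.Perm.cons a (Finset.sort_perm_toList _ _).symm
    have p4 := List.perm_append_singleton a (s.sort (· ≤ ·))
    exact ((p1.trans p2).trans p3).trans p4.symm
  have hs2 : List.Pairwise (· ≤ ·) (s.sort (· ≤ ·) ++ [a]) := by
    rw [List.pairwise_append]
    refine ⟨Finset.pairwise_sort _ _, List.pairwise_singleton _ a, ?_⟩
    intro x hx y hy
    simp only [List.mem_singleton] at hy
    subst hy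
    exact le_of_lt (h x ((Finset.mem_sort _).1 hx))
  exact List.Perm.eq_of_pairwise' (Finset.pairwise_sort _ _) hs2 hperm

/-- Evaluation of the sorted list of `T = (Icc 1 (d+1) \ {2}) ∪ {n}`. -/
lemma fT_eval (d n : ℕ) (hd : 1 ≤ d) (hn : d + 2 ≤ n) :
    ∀ j < d + 1, (((Finset.Icc 1 (d + 1) \ {2}) ∪ {n}).sort (· ≤ ·)).getD j 0 =
      if j = 0 then 1 else if j = d then n else j + 2 := by
  have hTeq : (Finset.Icc 1 (d + 1) \ {2}) ∪ {n}
      = insert n (insert 1 (Finset.Icc 3 (d + 1))) := by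
    ext x
    simp only [Finset.mem_union, Finset.mem_sdiff, Finset.mem_singleton, Finset.mem_insert,
      Finset.mem_Icc]
    omega
  have hsort1 : (insert 1 (Finset.Icc 3 (d + 1))).sort (· ≤ ·)
      = 1 :: (Finset.Icc 3 (d + 1)).sort (· ≤ ·) := by
    apply Finset.sort_insert
    · intro b hb; simp only [Finset.mem_Icc] at hb; omega
    · simp only [Finset.mem_Icc]; omega
  have hsortT : (insert n (insert 1 (Finset.Icc 3 (d + 1)))).sort (· ≤ ·)
      = (insert 1 (Finset.Icc 3 (d + 1))).sort (· ≤ ·) ++ [n] := by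
    apply sort_insert_top
    intro b hb
    simp only [Finset.mem_insert, Finset.mem_Icc] at hb
    omega
  have hlen : ((Finset.Icc 3 (d + 1)).sort (· ≤ ·)).length = d - 1 := by
    rw [Finset.length_sort, Nat.card_Icc]; omega
  intro j hj
  rw [hTeq, hsortT, hsort1, List.cons_append]
  rcases j with _ | j'
  · simp
  · rw [List.getD_cons_succ]
    by_cases hjd : j' + 1 = d
    · rw [List.getD_append_right _ _ _ _ (by omega), hlen]
      have h0 : j' - (d - 1) = 0 := by omega
      rw [h0, if_neg (by omega : ¬ j' + 1 = 0), if_pos hjd]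
      simp
    · rw [List.getD_append _ _ _ _ (by omega)]
      simp only [if_neg (by omega : ¬ j' + 1 = 0), if_neg hjd]
      have hb := getD_bounds (s := Finset.Icc 3 (d + 1)) (a := 3) (b := d + 1) (k := d - 1)
        (i := j') (Finset.Subset.refl _) (by rw [Nat.card_Icc]; omega) (by omega)
      omega

/-- The `(d+1)`-subsets of `{1, …, n}` below `T = ({1,…,d+1} \ {2}) ∪ {n}` in the
componentwise partial order are exactly the `d`-simplices of the LGRC, and there are
`d(n-d-1) + 1 = dn - (d² + d - 1)` of them. -/
theorem lgrc_is_lower_set_of_T (d n : ℕ) (hd : 1 ≤ d) (hn : d + 2 ≤ n) :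
    (((Finset.Icc 1 n).powersetCard (d + 1)).filter
        fun A => simplexLE d A ((Finset.Icc 1 (d + 1) \ {2}) ∪ {n})) = LGRC d n ∧
      (LGRC d n).card = d * (n - d - 1) + 1 ∧
      d * (n - d - 1) + 1 = d * n - (d ^ 2 + d - 1) := by
  have hfT := fT_eval d n hd hn
  refine ⟨?_, ?_, ?_⟩
  · -- set equality
    ext A
    simp only [Finset.mem_filter, Finset.mem_powersetCard, LGRC, Finset.mem_insert,
      Finset.mem_image, Finset.mem_product, Finset.mem_powersetCard, Finset.mem_Icc, Prod.exists]
    constructor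
    · rintro ⟨⟨hsub, hcard⟩, hle⟩
      have hbnd : ∀ j < d + 1, 1 + j ≤ (A.sort (· ≤ ·)).getD j 0 ∧
          (A.sort (· ≤ ·)).getD j 0 + (d - j) ≤ n := by
        intro j hj
        have := getD_bounds (s := A) (a := 1) (b := n) (k := d + 1) (i := j)
          (fun x hx => by simpa [Finset.mem_Icc] using hsub hx) hcard hj
        omega
      have hub : ∀ j < d + 1, (A.sort (· ≤ ·)).getD j 0 ≤
          if j = 0 then 1 else if j = d then n else j + 2 := by
        intro j hj
        rw [← hfT j hj]
        exact hle j hj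
      have hg0 : (A.sort (· ≤ ·)).getD 0 0 = 1 := by
        have h1 := hub 0 (by omega)
        have h2 := (hbnd 0 (by omega)).1
        rw [if_pos rfl] at h1
        omega
      have h1A : (1 : ℕ) ∈ A := by
        rw [← hg0]; exact getD_mem_of_lt (by omega)
      have hgdA : (A.sort (· ≤ ·)).getD d 0 ∈ A := getD_mem_of_lt (by omega)
      have hgd_lb : d + 1 ≤ (A.sort (· ≤ ·)).getD d 0 := by
        have := (hbnd d (by omega)).1; omega
      have hmono : ∀ j < d + 1, (A.sort (· ≤ ·)).getD j 0 + (d - j) ≤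
          (A.sort (· ≤ ·)).getD d 0 :=
        fun j hj => by
          have := sorted_getD_add (s := A) d (by omega) j (by omega); omega
      have hmemA : ∀ x ∈ A, ∃ j, j < d + 1 ∧ (A.sort (· ≤ ·)).getD j 0 = x := by
        intro x hx
        obtain ⟨j, hj, he⟩ := mem_eq_getD hx
        exact ⟨j, by omega, he⟩
      by_cases hcase : (A.sort (· ≤ ·)).getD d 0 = d + 1
      · left
        have hsub' : A ⊆ Finset.Icc 1 (d + 1) := by
          intro x hx
          obtain ⟨j, hj, rfl⟩ := hmemA x hx
          have := (hbnd j hj).1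
          have := hmono j hj
          simp only [Finset.mem_Icc]
          omega
        exact Finset.eq_of_subset_of_card_le hsub' (by rw [hcard, Nat.card_Icc]; omega)
      · right
        have hgd_ge : d + 2 ≤ (A.sort (· ≤ ·)).getD d 0 := by omega
        have hgd_le : (A.sort (· ≤ ·)).getD d 0 ≤ n := by
          have := hsub hgdA; simp only [Finset.mem_Icc] at this; omega
        refine ⟨(A.sort (· ≤ ·)).getD d 0,
          (A.erase 1).erase ((A.sort (· ≤ ·)).getD d 0),
          ⟨⟨hgd_ge, hgd_le⟩, ?_, ?_⟩, ?_⟩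
        · -- S ⊆ Icc 2 (d+1)
          intro x hx
          simp only [Finset.mem_erase] at hx
          obtain ⟨hx1, hx2, hx3⟩ := hx
          obtain ⟨j, hj, rfl⟩ := hmemA x hx3
          have hj0 : j ≠ 0 := fun h => by subst h; exact hx2 (by rw [hg0])
          have hjd : j ≠ d := fun h => by subst h; exact hx1 rfl
          have := (hbnd j hj).1
          have := hub j hj
          simp only [if_neg hj0, if_neg hjd] at this
          simp only [Finset.mem_Icc]
          omega
        · -- card
          have hm : (A.sort (· ≤ ·)).getD d 0 ∈ A.erase 1 :=
            Finset.mem_erase.2 ⟨by omega, hgdA⟩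
          rw [Finset.card_erase_of_mem hm, Finset.card_erase_of_mem h1A, hcard]
          omega
        · -- reconstruction
          ext x
          simp only [Finset.mem_insert, Finset.mem_erase]
          constructor
          · rintro (rfl | rfl | ⟨_, _, hx⟩)
            · exact h1A
            · exact hgdA
            · exact hx
          · intro hx
            by_cases h1 : x = 1
            · exact Or.inl h1
            · by_cases h2 : x = (A.sort (· ≤ ·)).getD d 0
              · exact Or.inr (Or.inl h2)
              · exact Or.inr (Or.inr ⟨h2, h1, hx⟩)
    · rintro (rfl | ⟨j, S, ⟨⟨hj1, hj2⟩, hS1, hS2⟩, rfl⟩)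
      · -- A = Icc 1 (d+1)
        refine ⟨⟨Finset.Icc_subset_Icc le_rfl (by omega), by rw [Nat.card_Icc]; omega⟩, ?_⟩
        intro i hi
        rw [hfT i hi]
        have hb := getD_bounds (s := Finset.Icc 1 (d + 1)) (a := 1) (b := d + 1) (k := d + 1)
          (i := i) (Finset.Subset.refl _) (by rw [Nat.card_Icc]; omega) hi
        split_ifs <;> omega
      · -- A = insert 1 (insert j S)
        have hSsub : ∀ x ∈ S, 2 ≤ x ∧ x ≤ d + 1 := by
          intro x hx
          have := hS1 hx
          simpa [Finset.mem_Icc] using this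
        have hjS : j ∉ S := fun h => by have := hSsub j h; omega
        have h1S : (1 : ℕ) ∉ insert j S := by
          simp only [Finset.mem_insert]
          rintro (rfl | h)
          · omega
          · have := hSsub 1 h; omega
        have h1S' : (1 : ℕ) ∉ S := fun h => h1S (Finset.mem_insert_of_mem h)
        have hcomm : insert 1 (insert j S) = insert j (insert 1 S) := Finset.insert_comm 1 j S
        have hsortA : (insert 1 (insert j S)).sort (· ≤ ·)
            = (1 :: S.sort (· ≤ ·)) ++ [j] := by
          rw [hcomm]
          rw [sort_insert_top (by
            intro b hb
            simp only [Finset.mem_insert] at hb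
            rcases hb with rfl | hb
            · omega
            · have := hSsub b hb; omega)]
          congr 1
          apply Finset.sort_insert
          · intro b hb; have := hSsub b hb; omega
          · exact h1S'
        have hlenS : (S.sort (· ≤ ·)).length = d - 1 := by
          rw [Finset.length_sort, hS2]
        have hcardA : (insert 1 (insert j S)).card = d + 1 := by
          rw [Finset.card_insert_of_notMem h1S, Finset.card_insert_of_notMem hjS, hS2]
          omega
        refine ⟨⟨?_, hcardA⟩, ?_⟩
        · intro x hx
          simp only [Finset.mem_insert] at hx
          simp only [Finset.mem_Icc]
          rcases hx with rfl | rfl | hx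
          · omega
          · omega
          · have := hSsub x hx; omega
        · intro i hi
          rw [hfT i hi, hsortA, List.cons_append]
          rcases i with _ | i'
          · simp
          · rw [List.getD_cons_succ]
            by_cases hid : i' + 1 = d
            · rw [List.getD_append_right _ _ _ _ (by omega), hlenS]
              have h0 : i' - (d - 1) = 0 := by omega
              rw [h0]
              simp only [if_neg (by omega : ¬ i' + 1 = 0), if_pos hid]
              simpa using hj2
            · rw [List.getD_append _ _ _ _ (by omega)]
              simp only [if_neg (by omega : ¬ i' + 1 = 0), if_neg hid]
              have hb := getD_bounds (s := S) (a := 2) (b := d + 1) (k := d - 1) (i := i')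
                hS1 hS2 (by omega)
              omega
  · -- cardinality
    rw [LGRC]
    have hnotmem : Finset.Icc 1 (d + 1) ∉
        ((Finset.Icc (d + 2) n ×ˢ (Finset.Icc 2 (d + 1)).powersetCard (d - 1)).image
          fun x => insert 1 (insert x.1 x.2)) := by
      intro h
      obtain ⟨⟨j, S⟩, hmem, heq⟩ := Finset.mem_image.1 h
      simp only [Finset.mem_product, Finset.mem_Icc] at hmem
      have hj : j ∈ Finset.Icc 1 (d + 1) := by
        rw [← heq]
        exact Finset.mem_insert_of_mem (Finset.mem_insert_self _ _)
      simp only [Finset.mem_Icc] at hj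
      omega
    rw [Finset.card_insert_of_notMem hnotmem]
    have hinj : Set.InjOn (fun x : ℕ × Finset ℕ => insert 1 (insert x.1 x.2))
        ↑(Finset.Icc (d + 2) n ×ˢ (Finset.Icc 2 (d + 1)).powersetCard (d - 1)) := by
      rintro ⟨j, S⟩ hx ⟨j', S'⟩ hy h
      simp only [Finset.mem_coe, Finset.mem_product, Finset.mem_Icc,
        Finset.mem_powersetCard] at hx hy
      simp only at h
      have hSb : ∀ x ∈ S, 2 ≤ x ∧ x ≤ d + 1 := fun x hxx => by
        have := hx.2.1 hxx; simpa [Finset.mem_Icc] using this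
      have hSb' : ∀ x ∈ S', 2 ≤ x ∧ x ≤ d + 1 := fun x hxx => by
        have := hy.2.1 hxx; simpa [Finset.mem_Icc] using this
      have hjj' : j = j' := by
        have hjmem : j ∈ insert 1 (insert j' S') := by
          rw [← h]; exact Finset.mem_insert_of_mem (Finset.mem_insert_self _ _)
        simp only [Finset.mem_insert] at hjmem
        rcases hjmem with rfl | rfl | hmem
        · exact absurd hx.1.1 (by omega)
        · rfl
        · have := hSb' j hmem; exact absurd hx.1.1 (by omega)
      subst hjj'
      have hjlb := hx.1.1
      have hSS : S = S' := by
        ext x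
        constructor
        · intro hxS
          have hxm : x ∈ insert 1 (insert j S') := by
            rw [← h]
            exact Finset.mem_insert_of_mem (Finset.mem_insert_of_mem hxS)
          have hb := hSb x hxS
          simp only [Finset.mem_insert] at hxm
          rcases hxm with h1 | h1 | hmem
          · exact absurd h1 (by omega)
          · exact absurd h1 (by omega)
          · exact hmem
        · intro hxS
          have hxm : x ∈ insert 1 (insert j S) := by
            rw [h]
            exact Finset.mem_insert_of_mem (Finset.mem_insert_of_mem hxS)
          have hb := hSb' x hxS
          simp only [Finset.mem_insert] at hxm
          rcases hxm with h1 | h1 | hmem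
          · exact absurd h1 (by omega)
          · exact absurd h1 (by omega)
          · exact hmem
      exact Prod.ext rfl hSS
    rw [Finset.card_image_of_injOn hinj, Finset.card_product, Nat.card_Icc,
      Finset.card_powersetCard, Nat.card_Icc]
    have hch : (d + 1 + 1 - 2).choose (d - 1) = d := by
      have h1 : d + 1 + 1 - 2 = d := by omega
      rw [h1]
      have h2 : d.choose (d - 1) = d.choose (d - (d - 1)) := (Nat.choose_symm (by omega)).symm
      have h3 : d - (d - 1) = 1 := by omega
      rw [h2, h3, Nat.choose_one_right]
    rw [hch]
    have : n + 1 - (d + 2) = n - d - 1 := by omega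
    rw [this, mul_comm]
  · -- arithmetic
    obtain ⟨m, rfl⟩ : ∃ m, n = d + 2 + m := ⟨n - (d + 2), by omega⟩
    have h1 : d + 2 + m - d - 1 = m + 1 := by omega
    rw [h1]
    have h2 : d * (m + 1) = d * m + d := by ring
    have h3 : d * (d + 2 + m) = d ^ 2 + 2 * d + d * m := by ring
    rw [h2, h3]
    have hsq : 1 ≤ d ^ 2 := Nat.one_le_pow _ _ (by omega)
    generalize d ^ 2 = q at hsq ⊢
    generalize d * m = p
    omega
end

section
/- Let d ≥ 1 and n ≥ d+1, and let Λ_d be the set of d-simplices of the LGRC on {1,…,n}. For every k with 0 ≤ k ≤ d, the number of (k+1)-element subsets of {1,…,n} that are contained in some member of Λ_d equals C(d+1, k+1) + Σ_{l=0}^{d−1} (n−d−1)·C(d−l, k−l), where C(a,b) denotes the binomial coefficient with the convention C(a,b) = 0 whenever b < 0. (This shows the face-number lower bound for bases of the d-volume rigidity matroid is sharp.) -/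
private lemma binom_sum (d k : ℕ) (h : k ≤ d) :
    (∑ l ∈ Finset.range d, if l ≤ k then (d - l).choose (k - l) else 0)
      + (if k = d then 1 else 0) = (d + 1).choose k := by
  induction d generalizing k with
  | zero => interval_cases k; simp
  | succ d ih =>
    rw [Finset.sum_range_succ']
    match k with
    | 0 =>
      simp
    | k + 1 =>
      have hk : k ≤ d := Nat.succ_le_succ_iff.mp h
      have h1 := ih k hk
      have h2 : (d + 1 + 1).choose (k + 1) = (d+1).choose k + (d+1).choose (k+1) :=
        Nat.choose_succ_succ _ _
      simp only [Nat.add_le_add_iff_right, Nat.succ_sub_succ, Nat.add_right_cancel_iff,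
        Nat.zero_le, if_pos, Nat.sub_zero]
      omega

/-- The number of `k`-faces of the LGRC attains the face-number lower bound for bases of
the `d`-volume rigidity matroid: for `0 ≤ k ≤ d`, the number of `(k+1)`-element subsets of
`{1, …, n}` contained in some `d`-simplex of the LGRC is exactly
`C(d+1, k+1) + ∑_{l=0}^{d-1} (n-d-1)·C(d-l, k-l)` (terms with `l > k` being zero). -/
theorem lgrc_face_numbers (d n : ℕ) (hd : 1 ≤ d) (hn : d + 1 ≤ n) :
    ∀ k ≤ d,
      (((Finset.Icc 1 n).powersetCard (k + 1)).filter
          fun τ => ∃ σ ∈ LGRC d n, τ ⊆ σ).card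
        = (d + 1).choose (k + 1)
            + ∑ l ∈ Finset.range d,
                (if l ≤ k then (n - d - 1) * (d - l).choose (k - l) else 0) := by
  intro k hk
  classical
  set I := Finset.Icc 1 (d+1) with hI
  set Q := (I.powersetCard k).filter (fun τ => (τ.erase 1).card ≤ d - 1) with hQ
  set T := (Finset.Icc (d+2) n) ×ˢ Q with hT
  set A := I.powersetCard (k+1) with hA
  set B := T.image (fun x : ℕ × Finset ℕ => insert x.1 x.2) with hB
  -- members of Q are subsets of I with card k and small erase
  have hQmem : ∀ τ ∈ Q, τ ⊆ I ∧ τ.card = k ∧ (τ.erase 1).card ≤ d - 1 := by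
    intro τ hτ
    rw [hQ, Finset.mem_filter, Finset.mem_powersetCard] at hτ
    tauto
  have key : ((Finset.Icc 1 n).powersetCard (k + 1)).filter
      (fun τ => ∃ σ ∈ LGRC d n, τ ⊆ σ) = A ∪ B := by
    ext τ
    simp only [Finset.mem_filter, Finset.mem_union, Finset.mem_powersetCard]
    constructor
    · rintro ⟨⟨hsub, hcard⟩, σ, hσ, hτσ⟩
      rw [LGRC, Finset.mem_insert] at hσ
      rcases hσ with rfl | hσ
      · left; rw [hA, Finset.mem_powersetCard]; exact ⟨hτσ, hcard⟩
      · rw [Finset.mem_image] at hσ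
        obtain ⟨⟨j, S⟩, hmem, rfl⟩ := hσ
        rw [Finset.mem_product, Finset.mem_powersetCard] at hmem
        obtain ⟨hj, hS1, hS2⟩ := hmem
        dsimp only at hj hS1 hS2
        rw [Finset.mem_Icc] at hj
        have hSI : ∀ x ∈ S, 2 ≤ x ∧ x ≤ d + 1 := by
          intro x hx; have := hS1 hx; rw [Finset.mem_Icc] at this; exact this
        by_cases hjτ : j ∈ τ
        · right
          rw [hB, Finset.mem_image]
          refine ⟨(j, τ.erase j), ?_, Finset.insert_erase hjτ⟩
          rw [hT, Finset.mem_product]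
          constructor
          · rw [Finset.mem_Icc]; omega
          · rw [hQ, Finset.mem_filter, Finset.mem_powersetCard]
            dsimp only
            have hersub : τ.erase j ⊆ I := by
              intro x hx
              have hxj : x ≠ j := Finset.ne_of_mem_erase hx
              have hxτ : x ∈ τ := Finset.mem_of_mem_erase hx
              have := hτσ hxτ
              rw [Finset.mem_insert, Finset.mem_insert] at this
              rw [hI, Finset.mem_Icc]
              rcases this with rfl | rfl | h
              · omega
              · exact absurd rfl hxj
              · have := hSI x h; omega
            refine ⟨⟨hersub, ?_⟩, ?_⟩
            · rw [Finset.card_erase_of_mem hjτ, hcard]; omega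
            · have : (τ.erase j).erase 1 ⊆ S := by
                intro x hx
                have hx1 : x ≠ 1 := Finset.ne_of_mem_erase hx
                have hxj : x ≠ j := Finset.ne_of_mem_erase (Finset.mem_of_mem_erase hx)
                have hxτ : x ∈ τ := Finset.mem_of_mem_erase (Finset.mem_of_mem_erase hx)
                have := hτσ hxτ
                rw [Finset.mem_insert, Finset.mem_insert] at this
                tauto
              have := Finset.card_le_card this
              omega
        · left
          rw [hA, Finset.mem_powersetCard]
          refine ⟨?_, hcard⟩
          intro x hx
          have := hτσ hx
          rw [Finset.mem_insert, Finset.mem_insert] at this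
          rw [hI, Finset.mem_Icc]
          rcases this with rfl | rfl | h
          · omega
          · exact absurd hx hjτ
          · have := hSI x h; omega
    · rintro (hτA | hτB)
      · rw [hA, Finset.mem_powersetCard] at hτA
        obtain ⟨hsub, hcard⟩ := hτA
        refine ⟨⟨?_, hcard⟩, Finset.Icc 1 (d+1), Finset.mem_insert_self _ _, hsub⟩
        intro x hx
        have := hsub hx
        rw [hI, Finset.mem_Icc] at this
        rw [Finset.mem_Icc]
        omega
      · rw [hB, Finset.mem_image] at hτB
        obtain ⟨⟨j, τ'⟩, hmem, rfl⟩ := hτB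
        rw [hT, Finset.mem_product] at hmem
        obtain ⟨hj, hτ'⟩ := hmem
        dsimp only at hj hτ'
        rw [Finset.mem_Icc] at hj
        obtain ⟨hsub', hcard', hsmall⟩ := hQmem _ hτ'
        have hτ'I : ∀ x ∈ τ', 1 ≤ x ∧ x ≤ d + 1 := by
          intro x hx; have := hsub' hx; rw [hI, Finset.mem_Icc] at this; exact this
        have hjτ' : j ∉ τ' := by
          intro h; have := hτ'I j h; omega
        have her : τ'.erase 1 ⊆ Finset.Icc 2 (d+1) := by
          intro x hx
          have hx1 : x ≠ 1 := Finset.ne_of_mem_erase hx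
          have := hτ'I x (Finset.mem_of_mem_erase hx)
          rw [Finset.mem_Icc]; omega
        obtain ⟨S, hS1, hS2, hS3⟩ := Finset.exists_subsuperset_card_eq her hsmall
          (by rw [Nat.card_Icc]; omega)
        refine ⟨⟨?_, ?_⟩, insert 1 (insert j S), ?_, ?_⟩
        · intro x hx
          rw [Finset.mem_insert] at hx
          rw [Finset.mem_Icc]
          rcases hx with rfl | hx
          · omega
          · have := hτ'I x hx; omega
        · rw [Finset.card_insert_of_notMem hjτ', hcard']
        · rw [LGRC, Finset.mem_insert]
          right
          rw [Finset.mem_image]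
          refine ⟨(j, S), ?_, rfl⟩
          rw [Finset.mem_product, Finset.mem_powersetCard, Finset.mem_Icc]
          exact ⟨⟨by omega, by omega⟩, hS2, hS3⟩
        · intro x hx
          rw [Finset.mem_insert] at hx
          simp only [Finset.mem_insert]
          rcases hx with rfl | hx
          · right; left; rfl
          · by_cases hx1 : x = 1
            · left; exact hx1
            · right; right; exact hS1 (Finset.mem_erase.mpr ⟨hx1, hx⟩)
  -- disjointness
  have hdisj : Disjoint A B := by
    rw [Finset.disjoint_left]
    intro τ hτA hτB
    rw [hA, Finset.mem_powersetCard] at hτA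
    rw [hB, Finset.mem_image] at hτB
    obtain ⟨⟨j, τ'⟩, hmem, rfl⟩ := hτB
    rw [hT, Finset.mem_product, Finset.mem_Icc] at hmem
    have := hτA.1 (Finset.mem_insert_self j τ')
    rw [hI, Finset.mem_Icc] at this
    omega
  -- injectivity
  have hinj : Set.InjOn (fun x : ℕ × Finset ℕ => insert x.1 x.2) T := by
    rintro ⟨j₁, τ₁⟩ h₁ ⟨j₂, τ₂⟩ h₂ heq
    rw [hT, Finset.mem_coe, Finset.mem_product, Finset.mem_Icc] at h₁ h₂
    obtain ⟨hsub₁, _, _⟩ := hQmem _ h₁.2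
    obtain ⟨hsub₂, _, _⟩ := hQmem _ h₂.2
    simp only at heq
    have hj₁ : j₁ ∉ τ₁ := by
      intro h; have := hsub₁ h; rw [hI, Finset.mem_Icc] at this; omega
    have hj₂ : j₂ ∉ τ₂ := by
      intro h; have := hsub₂ h; rw [hI, Finset.mem_Icc] at this; omega
    have hjj : j₁ = j₂ := by
      have : j₁ ∈ insert j₂ τ₂ := heq ▸ Finset.mem_insert_self j₁ τ₁
      rw [Finset.mem_insert] at this
      rcases this with h | h
      · exact h
      · have := hsub₂ h; rw [hI, Finset.mem_Icc] at this; omega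
    subst hjj
    have : τ₁ = τ₂ := by
      have := congrArg (fun s => Finset.erase s j₁) heq
      simpa [Finset.erase_insert, hj₁, hj₂] using this
    rw [this]
  have hIcard : I.card = d + 1 := by simp [hI, Nat.card_Icc]
  have hQcard : Q.card + (if k = d then 1 else 0) = (d+1).choose k := by
    have h1 := Finset.card_filter_add_card_filter_not
      (s := I.powersetCard k) (p := fun τ => (τ.erase 1).card ≤ d - 1)
    have h2 : (I.powersetCard k).filter (fun τ => ¬ (τ.erase 1).card ≤ d - 1)
        = if k = d then {Finset.Icc 2 (d+1)} else ∅ := by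
      ext τ
      simp only [Finset.mem_filter, Finset.mem_powersetCard, not_le]
      constructor
      · rintro ⟨⟨hsub, hcard⟩, hbig⟩
        have h1τ : 1 ∉ τ := by
          intro h1τ
          have := Finset.card_erase_of_mem h1τ
          omega
        have herase : τ.erase 1 = τ := Finset.erase_eq_of_notMem h1τ
        rw [herase] at hbig
        have hτsub : τ ⊆ Finset.Icc 2 (d+1) := by
          intro x hx
          have := hsub hx
          rw [hI, Finset.mem_Icc] at this
          rw [Finset.mem_Icc]
          have : x ≠ 1 := fun h => h1τ (h ▸ hx)
          omega
        have hkd : k = d := by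
          have := Finset.card_le_card hτsub
          rw [Nat.card_Icc] at this
          omega
        rw [if_pos hkd, Finset.mem_singleton]
        exact Finset.eq_of_subset_of_card_le hτsub (by rw [Nat.card_Icc]; omega)
      · intro hmem
        by_cases hkd : k = d
        · rw [if_pos hkd, Finset.mem_singleton] at hmem
          subst hmem
          have h1not : (1 : ℕ) ∉ Finset.Icc 2 (d+1) := by simp
          refine ⟨⟨?_, by rw [Nat.card_Icc]; omega⟩, ?_⟩
          · intro x hx; rw [Finset.mem_Icc] at hx; rw [hI, Finset.mem_Icc]; omega
          · rw [Finset.erase_eq_of_notMem h1not, Nat.card_Icc]; omega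
        · rw [if_neg hkd] at hmem; exact absurd hmem (Finset.notMem_empty _)
    rw [h2] at h1
    rw [Finset.card_powersetCard, hIcard] at h1
    split at h1 <;> simp_all
  have hsum := binom_sum d k hk
  have hQs : Q.card = ∑ l ∈ Finset.range d, if l ≤ k then (d - l).choose (k - l) else 0 :=
    Nat.add_right_cancel (hQcard.trans hsum.symm)
  rw [key, Finset.card_union_of_disjoint hdisj, Finset.card_image_of_injOn hinj, hT,
    Finset.card_product, hA, Finset.card_powersetCard, hIcard, Nat.card_Icc, hQs,
    Finset.mul_sum]
  have hmul : n + 1 - (d + 2) = n - d - 1 := by omega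
  rw [hmul]
  congr 1
  refine Finset.sum_congr rfl fun l _ => ?_
  rw [mul_ite, mul_zero]
end

section
/- Let d ≥ 1 and n ≥ d+1, and let Λ_d be the set of d-simplices of the LGRC on {1,…,n}. For all generic configurations p, q : Fin n → (Fin d → ℝ): if vol_σ(p) = vol_σ(q) for every σ ∈ Λ_d, then vol_τ(p) = vol_τ(q) for every (d+1)-element subset τ of {1,…,n}. In other words, the d-dimensional LGRC on n vertices is generically globally d-volume rigid in ℝ^d. -/
set_option maxHeartbeats 1000000


/-- The signed `d`-volume of the `(d+1)`-element simplex `σ ⊆ ℕ` at the configuration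
`p : ℕ → Fin d → ℝ`: the determinant of the `(d+1) × (d+1)` matrix whose `j`-th column has
first entry `1` followed by the `d` coordinates of the `j`-th point of `σ` (in increasing
order).  Junk value `0` if `σ` does not have `d+1` elements. -/
noncomputable def vol (d : ℕ) (σ : Finset ℕ) (p : ℕ → Fin d → ℝ) : ℝ :=
  if h : σ.card = d + 1 then
    Matrix.det
      ((Matrix.of (Fin.cons (fun _ => (1 : ℝ)) fun i j => p (σ.orderEmbOfFin h j) i) :
        Matrix (Fin (d + 1)) (Fin (d + 1)) ℝ))
  else 0

/-- A configuration of the `n` vertices `{1, …, n}` in `ℝ^d` is generic if every nonzero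
polynomial with rational coefficients in the `d·n` coordinate variables is nonzero at the
coordinates of the configuration. -/
def IsGeneric (d n : ℕ) (p : ℕ → Fin d → ℝ) : Prop :=
  ∀ f : MvPolynomial (↥(Finset.Icc 1 n) × Fin d) ℚ, f ≠ 0 →
    (MvPolynomial.aeval fun v : ↥(Finset.Icc 1 n) × Fin d => p v.1.1 v.2) f ≠ 0

namespace LGRCAux

open Finset Matrix



/-- The lifted point `(1, p t) ∈ ℝ^{d+1}`. -/
noncomputable def vpoint (d : ℕ) (p : ℕ → Fin d → ℝ) (t : ℕ) : Fin (d + 1) → ℝ :=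
  Fin.cons 1 (p t)

@[simp] lemma vpoint_zero (d : ℕ) (p : ℕ → Fin d → ℝ) (t : ℕ) : vpoint d p t 0 = 1 :=
  rfl

/-- The matrix whose `j`-th column is the lifted point of vertex `c j`. -/
noncomputable def colMat (d : ℕ) (p : ℕ → Fin d → ℝ) (c : Fin (d + 1) → ℕ) :
    Matrix (Fin (d + 1)) (Fin (d + 1)) ℝ :=
  Matrix.of fun i j => vpoint d p (c j) i

lemma mul_col (d : ℕ) (A M : Matrix (Fin (d + 1)) (Fin (d + 1)) ℝ) (i j : Fin (d + 1)) :
    (A * M) i j = (A *ᵥ fun i' => M i' j) i := by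
  simp [Matrix.mul_apply, Matrix.mulVec, dotProduct]

lemma det_updateColumn_sub {m : ℕ} (M : Matrix (Fin m) (Fin m) ℝ) (j : Fin m)
    (u v : Fin m → ℝ) :
    (M.updateCol j (u - v)).det = (M.updateCol j u).det - (M.updateCol j v).det := by
  have h : u - v = u + (-1 : ℝ) • v := by ext i; simp; ring
  rw [h, Matrix.det_updateCol_add, Matrix.det_updateCol_smul]
  ring

lemma vol_eq_det {d : ℕ} {σ : Finset ℕ} (p : ℕ → Fin d → ℝ) (h : σ.card = d + 1)
    {e : Fin (d + 1) → ℕ} (he : ∀ x, e x ∈ σ) (hm : StrictMono e) :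
    vol d σ p = (colMat d p e).det := by
  have hE : e = fun j => σ.orderEmbOfFin h j := Finset.orderEmbOfFin_unique h he hm
  rw [vol, dif_pos h]
  congr 1
  funext i j
  refine Fin.cases ?_ (fun i' => ?_) i
  · simp [colMat, vpoint]
  · simp [colMat, vpoint, hE]

/-- Genericity implies the base matrix of a configuration is nonsingular. -/
lemma det_base_ne_zero (d n : ℕ) (hn : d + 1 ≤ n) (p : ℕ → Fin d → ℝ)
    (hp : IsGeneric d n p) : (colMat d p (fun j => (j : ℕ) + 1)).det ≠ 0 := by
  have hmem : ∀ j : Fin (d + 1), (j : ℕ) + 1 ∈ Finset.Icc 1 n := by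
    intro j
    rw [Finset.mem_Icc]
    have := j.isLt
    omega
  set F : Matrix (Fin (d + 1)) (Fin (d + 1)) (MvPolynomial (↥(Finset.Icc 1 n) × Fin d) ℚ) :=
    Matrix.of (Fin.cons (fun _ => 1) fun i j => MvPolynomial.X (⟨⟨(j : ℕ) + 1, hmem j⟩, i⟩))
    with hF
  have hFne : F.det ≠ 0 := by
    intro h0
    have hx : ∀ i j : Fin (d + 1),
        (MvPolynomial.eval
          (fun v : ↥(Finset.Icc 1 n) × Fin d => ((v.1 : ℕ) : ℚ) ^ ((v.2 : ℕ) + 1)))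
          (F i j) = (Matrix.vandermonde (fun j : Fin (d + 1) => ((j : ℕ) + 1 : ℚ)))ᵀ i j := by
      intro i j
      refine Fin.cases ?_ (fun i' => ?_) i
      · simp [hF, Matrix.vandermonde]
      · simp [hF, Matrix.vandermonde]
    have := congrArg
      (MvPolynomial.eval
        (fun v : ↥(Finset.Icc 1 n) × Fin d => ((v.1 : ℕ) : ℚ) ^ ((v.2 : ℕ) + 1))) h0
    rw [RingHom.map_det, RingHom.mapMatrix_apply] at this
    have hMeq : F.map (MvPolynomial.eval
        (fun v : ↥(Finset.Icc 1 n) × Fin d => ((v.1 : ℕ) : ℚ) ^ ((v.2 : ℕ) + 1))) =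
        (Matrix.vandermonde (fun j : Fin (d + 1) => ((j : ℕ) + 1 : ℚ)))ᵀ := by
      funext i j; exact hx i j
    rw [hMeq] at this
    simp only [map_zero] at this
    rw [Matrix.det_transpose, Matrix.det_vandermonde] at this
    have : ∃ i ∈ (Finset.univ : Finset (Fin (d + 1))), ∏ j ∈ Finset.Ioi i,
        (((j : ℕ) + 1 : ℚ) - ((i : ℕ) + 1 : ℚ)) = 0 := Finset.prod_eq_zero_iff.mp this
    obtain ⟨i, -, hi⟩ := this
    obtain ⟨j, hj, hj0⟩ := Finset.prod_eq_zero_iff.mp hi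
    rw [Finset.mem_Ioi] at hj
    have hlt : (i : ℕ) < (j : ℕ) := hj
    have hne : ((j : ℕ) : ℚ) ≠ ((i : ℕ) : ℚ) := by
      exact_mod_cast Nat.ne_of_gt hlt
    apply hne
    linarith [sub_eq_zero.mp hj0]
  have := hp F.det hFne
  convert this using 1
  rw [AlgHom.map_det, AlgHom.mapMatrix_apply]
  congr 1
  funext i j
  refine Fin.cases ?_ (fun i' => ?_) i
  · simp [hF, colMat, vpoint]
  · simp [hF, colMat, vpoint]

end LGRCAux

open Matrix in
/-- The `d`-dimensional LGRC on `n` vertices is generically globally `d`-volume rigid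
in `ℝ^d`. -/
theorem lgrc_generically_globally_rigid (d n : ℕ) (hd : 1 ≤ d) (hn : d + 1 ≤ n)
    (p q : ℕ → Fin d → ℝ) (hp : IsGeneric d n p) (hq : IsGeneric d n q)
    (heq : ∀ σ ∈ LGRC d n, vol d σ p = vol d σ q) :
    ∀ τ ⊆ Finset.Icc 1 n, τ.card = d + 1 → vol d τ p = vol d τ q := by
  classical
  set P := LGRCAux.colMat d p (fun j => (j : ℕ) + 1) with hPdef
  set Q := LGRCAux.colMat d q (fun j => (j : ℕ) + 1) with hQdef
  have hP : P.det ≠ 0 := LGRCAux.det_base_ne_zero d n hn p hp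
  have hQ : Q.det ≠ 0 := LGRCAux.det_base_ne_zero d n hn q hq
  have hbcard : (Finset.Icc 1 (d + 1)).card = d + 1 := by
    rw [Nat.card_Icc]; omega
  have hPQ : P.det = Q.det := by
    have h1 := heq _ (Finset.mem_insert_self (Finset.Icc 1 (d + 1)) _)
    have he : ∀ x : Fin (d + 1), (x : ℕ) + 1 ∈ Finset.Icc 1 (d + 1) := by
      intro x; rw [Finset.mem_Icc]; have := x.isLt; omega
    have hm : StrictMono (fun j : Fin (d + 1) => (j : ℕ) + 1) := by
      intro a b hab
      have h' : (a : ℕ) < (b : ℕ) := hab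
      show (a : ℕ) + 1 < (b : ℕ) + 1
      omega
    rwa [LGRCAux.vol_eq_det p hbcard he hm, LGRCAux.vol_eq_det q hbcard he hm] at h1
  set A := Q * P⁻¹ with hAdef
  have hdetA : A.det = 1 := by
    rw [hAdef, Matrix.det_mul, Matrix.det_nonsing_inv, Ring.inverse_eq_inv', hPQ,
      mul_inv_cancel₀ hQ]
  have hAP : A * P = Q := by
    rw [hAdef, Matrix.mul_assoc, Matrix.nonsing_inv_mul P (isUnit_iff_ne_zero.mpr hP),
      Matrix.mul_one]
  -- images of the lifted base points
  have hbasecase : ∀ t : ℕ, 1 ≤ t → t ≤ d + 1 →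
      A *ᵥ LGRCAux.vpoint d p t = LGRCAux.vpoint d q t := by
    intro t h1 h2
    set j : Fin (d + 1) := ⟨t - 1, by omega⟩ with hj
    have hjt : (j : ℕ) + 1 = t := by rw [hj]; simp only [Fin.val_mk]; omega
    have hvp : LGRCAux.vpoint d p t = fun i => P i j := by
      funext i
      rw [hPdef]
      show LGRCAux.vpoint d p t i = LGRCAux.vpoint d p ((j : ℕ) + 1) i
      rw [hjt]
    have hvq : LGRCAux.vpoint d q t = fun i => Q i j := by
      funext i
      rw [hQdef]
      show LGRCAux.vpoint d q t i = LGRCAux.vpoint d q ((j : ℕ) + 1) i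
      rw [hjt]
    funext i
    show (A *ᵥ LGRCAux.vpoint d p t) i = LGRCAux.vpoint d q t i
    rw [hvp, hvq, ← LGRCAux.mul_col d A P i j, hAP]
  -- the first row of `A` is `(1, 0, …, 0)`
  have hA0 : ∀ v : Fin (d + 1) → ℝ, (A *ᵥ v) 0 = v 0 := by
    intro v
    have hrow : ∀ m : Fin (d + 1), A 0 m = (1 : Matrix (Fin (d + 1)) (Fin (d + 1)) ℝ) 0 m := by
      intro m
      have h1 : A 0 m = ∑ x, Q 0 x * P⁻¹ x m := by rw [hAdef, Matrix.mul_apply]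
      have h2 : (P * P⁻¹) 0 m = ∑ x, P 0 x * P⁻¹ x m := Matrix.mul_apply
      have h3 : ∀ x : Fin (d + 1), Q 0 x = P 0 x := fun x => rfl
      rw [h1]
      simp_rw [h3]
      rw [← h2, Matrix.mul_nonsing_inv P (isUnit_iff_ne_zero.mpr hP)]
    calc (A *ᵥ v) 0 = ∑ m, A 0 m * v m := rfl
      _ = ∑ m, (1 : Matrix (Fin (d + 1)) (Fin (d + 1)) ℝ) 0 m * v m := by simp_rw [hrow]
      _ = v 0 := by simp [Matrix.one_apply]
  -- main claim: `A` maps every lifted point of `p` to the lifted point of `q`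
  have hmain : ∀ t ∈ Finset.Icc 1 n, A *ᵥ LGRCAux.vpoint d p t = LGRCAux.vpoint d q t := by
    intro t ht
    rw [Finset.mem_Icc] at ht
    rcases le_or_gt t (d + 1) with hle | hgt
    · exact hbasecase t ht.1 hle
    · have ht2 : d + 2 ≤ t := hgt
      set w : Fin (d + 1) → ℝ := LGRCAux.vpoint d q t - A *ᵥ LGRCAux.vpoint d p t with hwdef
      have hw0 : w 0 = 0 := by
        rw [hwdef]
        show LGRCAux.vpoint d q t 0 - (A *ᵥ LGRCAux.vpoint d p t) 0 = 0
        rw [hA0]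
        simp
      have hkey : ∀ k : Fin d, (Q.updateCol ⟨(k : ℕ) + 1, by omega⟩ w).det = 0 := by
        intro k
        have hk' : (k : ℕ) < d := k.isLt
        set S : Finset ℕ := (Finset.Icc 2 (d + 1)).erase ((k : ℕ) + 2) with hSdef
        have hk2 : (k : ℕ) + 2 ∈ Finset.Icc 2 (d + 1) := by rw [Finset.mem_Icc]; omega
        have hScard : S.card = d - 1 := by
          rw [hSdef, Finset.card_erase_of_mem hk2, Nat.card_Icc]
          omega
        have hSsub : S ⊆ Finset.Icc 2 (d + 1) := Finset.erase_subset _ _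
        set σ : Finset ℕ := insert 1 (insert t S) with hσdef
        have hσmem : σ ∈ LGRC d n := by
          rw [LGRC]
          apply Finset.mem_insert_of_mem
          apply Finset.mem_image.mpr
          refine ⟨(t, S), ?_, rfl⟩
          rw [Finset.mem_product, Finset.mem_Icc, Finset.mem_powersetCard]
          exact ⟨⟨ht2, ht.2⟩, hSsub, hScard⟩
        have hmemS : ∀ x ∈ S, 2 ≤ x ∧ x ≤ d + 1 ∧ x ≠ (k : ℕ) + 2 := by
          intro x hx
          rw [hSdef, Finset.mem_erase, Finset.mem_Icc] at hx
          tauto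
        have htnS : t ∉ S := fun h => by have := hmemS t h; omega
        have h1nS : (1 : ℕ) ∉ insert t S := by
          rw [Finset.mem_insert]
          push_neg
          exact ⟨by omega, fun h => by have := hmemS 1 h; omega⟩
        have hσcard : σ.card = d + 1 := by
          rw [hσdef, Finset.card_insert_of_notMem h1nS, Finset.card_insert_of_notMem htnS,
            hScard]
          omega
        set e : Fin (d + 1) → ℕ := fun j =>
          if (j : ℕ) = d then t else if (j : ℕ) ≤ (k : ℕ) then (j : ℕ) + 1 else (j : ℕ) + 2
          with hedef
        have he_val : ∀ j : Fin (d + 1), e j =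
            if (j : ℕ) = d then t else if (j : ℕ) ≤ (k : ℕ) then (j : ℕ) + 1 else (j : ℕ) + 2 :=
          fun j => rfl
        have he_mem : ∀ j, e j ∈ σ := by
          intro j
          have hjlt := j.isLt
          rw [hσdef, he_val j]
          simp only [Finset.mem_insert, hSdef, Finset.mem_erase, Finset.mem_Icc]
          by_cases hjd : (j : ℕ) = d
          · rw [if_pos hjd]
            exact Or.inr (Or.inl rfl)
          · rw [if_neg hjd]
            by_cases hjk : (j : ℕ) ≤ (k : ℕ)
            · rw [if_pos hjk]; omega
            · rw [if_neg hjk]; omega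
        have he_mono : StrictMono e := by
          intro a b hab
          have hab' : (a : ℕ) < (b : ℕ) := hab
          have ha := a.isLt
          have hb := b.isLt
          rw [hedef]
          dsimp only
          split_ifs <;> omega
        have hvol := heq σ hσmem
        rw [LGRCAux.vol_eq_det p hσcard he_mem he_mono,
          LGRCAux.vol_eq_det q hσcard he_mem he_mono] at hvol
        have helast : e (Fin.last d) = t := by
          rw [hedef]; simp
        have hupd_self :
            (LGRCAux.colMat d q e).updateCol (Fin.last d) (LGRCAux.vpoint d q t) =
              LGRCAux.colMat d q e := by
          have hcol : LGRCAux.vpoint d q t = fun i => LGRCAux.colMat d q e i (Fin.last d) := by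
            funext i
            show LGRCAux.vpoint d q t i = LGRCAux.vpoint d q (e (Fin.last d)) i
            rw [helast]
          rw [hcol]
          exact Matrix.updateCol_eq_self _ _
        have hsmall : ∀ j : Fin (d + 1), j ≠ Fin.last d → 1 ≤ e j ∧ e j ≤ d + 1 := by
          intro j hj
          have hjd : (j : ℕ) ≠ d := fun h => hj (Fin.ext h)
          have hjlt := j.isLt
          rw [hedef]
          dsimp only
          rw [if_neg hjd]
          split_ifs <;> omega
        have hupdA :
            (LGRCAux.colMat d q e).updateCol (Fin.last d) (A *ᵥ LGRCAux.vpoint d p t) =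
              A * LGRCAux.colMat d p e := by
          funext i j
          rcases eq_or_ne j (Fin.last d) with rfl | hj
          · rw [Matrix.updateCol_apply, if_pos rfl, LGRCAux.mul_col]
            congr 1
            funext i'
            show LGRCAux.vpoint d p t i' = LGRCAux.vpoint d p (e (Fin.last d)) i'
            rw [helast]
          · rw [Matrix.updateCol_apply, if_neg hj, LGRCAux.mul_col]
            have hbc := hbasecase (e j) (hsmall j hj).1 (hsmall j hj).2
            show LGRCAux.vpoint d q (e j) i = _
            rw [← hbc]
            rfl
        have hzero : ((LGRCAux.colMat d q e).updateCol (Fin.last d) w).det = 0 := by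
          rw [hwdef, LGRCAux.det_updateColumn_sub, hupd_self, hupdA, Matrix.det_mul, hdetA,
            one_mul, hvol, sub_self]
        -- permute the columns
        set κ : Fin (d + 1) := ⟨(k : ℕ) + 1, by omega⟩ with hκdef
        have hκval : (κ : ℕ) = (k : ℕ) + 1 := rfl
        set π0 : Fin (d + 1) → Fin (d + 1) := fun j =>
          if hjd : (j : ℕ) = d then κ
          else if (j : ℕ) ≤ (k : ℕ) then j else ⟨(j : ℕ) + 1, by have := j.isLt; omega⟩
          with hπ0def
        have hπ0d : ∀ j : Fin (d + 1), (j : ℕ) = d → π0 j = κ := by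
          intro j hjd
          simp only [hπ0def]
          rw [dif_pos hjd]
        have hπ0small : ∀ (j : Fin (d + 1)), (j : ℕ) ≠ d →
            (π0 j : ℕ) = if (j : ℕ) ≤ (k : ℕ) then (j : ℕ) else (j : ℕ) + 1 := by
          intro j hjd
          simp only [hπ0def]
          rw [dif_neg hjd]
          by_cases hjk : (j : ℕ) ≤ (k : ℕ)
          · rw [if_pos hjk, if_pos hjk]
          · rw [if_neg hjk, if_neg hjk]
        have hπ0inj : Function.Injective π0 := by
          intro a b hab
          have hv := congrArg Fin.val hab
          have ha := a.isLt
          have hb := b.isLt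
          apply Fin.ext
          by_cases had : (a : ℕ) = d <;> by_cases hbd : (b : ℕ) = d
          · rw [had, hbd]
          · have h1 : ((k : ℕ) + 1) = (π0 b : ℕ) := by
              rw [← hκval, ← hπ0d a had, hab]
            rw [hπ0small b hbd] at h1
            split_ifs at h1 <;> omega
          · have h1 : (π0 a : ℕ) = ((k : ℕ) + 1) := by
              rw [← hκval, ← hπ0d b hbd, hab]
            rw [hπ0small a had] at h1
            split_ifs at h1 <;> omega
          · rw [hπ0small a had, hπ0small b hbd] at hv
            split_ifs at hv <;> omega
        set π : Equiv.Perm (Fin (d + 1)) :=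
          Equiv.ofBijective π0 (Finite.injective_iff_bijective.mp hπ0inj) with hπdef
        have hπ : ∀ j, π j = π0 j := fun j => rfl
        have hsub : (Q.updateCol κ w).submatrix id π =
            (LGRCAux.colMat d q e).updateCol (Fin.last d) w := by
          funext i j
          rw [Matrix.submatrix_apply, id_eq, hπ j]
          rcases eq_or_ne j (Fin.last d) with rfl | hj
          · rw [hπ0d (Fin.last d) rfl, Matrix.updateCol_apply, if_pos rfl,
              Matrix.updateCol_apply, if_pos rfl]
          · have hjd : (j : ℕ) ≠ d := fun h => hj (Fin.ext h)
            have hjlt := j.isLt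
            have hπval := hπ0small j hjd
            have hπκ : ¬ (π0 j = κ) := by
              intro hh
              have hvv := congrArg Fin.val hh
              rw [hπval, hκval] at hvv
              split_ifs at hvv <;> omega
            rw [Matrix.updateCol_apply, Matrix.updateCol_apply, if_neg hj, if_neg hπκ]
            show LGRCAux.vpoint d q ((π0 j : ℕ) + 1) i = LGRCAux.vpoint d q (e j) i
            rw [hπval, he_val j, if_neg hjd]
            by_cases hjk : (j : ℕ) ≤ (k : ℕ)
            · rw [if_pos hjk, if_pos hjk]
            · rw [if_neg hjk, if_neg hjk]
        have hperm := Matrix.det_permute' π (Q.updateCol κ w)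
        rw [hsub, hzero] at hperm
        rcases Int.units_eq_one_or (Equiv.Perm.sign π) with hs | hs <;>
          rw [hs] at hperm <;> simpa using hperm.symm
      -- Cramer's rule
      have hcr : ∀ i : Fin (d + 1), i ≠ 0 → Matrix.cramer Q w i = 0 := by
        intro i hi
        have hi' : (i : ℕ) ≠ 0 := fun h => hi (Fin.ext h)
        have hilt := i.isLt
        have hik : i = ⟨((⟨(i : ℕ) - 1, by omega⟩ : Fin d) : ℕ) + 1, by simp; omega⟩ := by
          apply Fin.ext
          simp
          omega
        rw [Matrix.cramer_apply, hik]
        exact hkey ⟨(i : ℕ) - 1, by omega⟩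
      have hsingle : Matrix.cramer Q w = Pi.single 0 (Matrix.cramer Q w 0) := by
        funext i
        rcases eq_or_ne i 0 with rfl | hi
        · simp
        · rw [hcr i hi, Pi.single_eq_of_ne hi]
      have hmv := Matrix.mulVec_cramer Q w
      rw [hsingle, Matrix.mulVec_single] at hmv
      have h0 : Q 0 0 * Matrix.cramer Q w 0 = (Q.det • w) 0 := by
        rw [← congrFun hmv 0, Pi.smul_apply, op_smul_eq_mul]; rfl
      have hQ00 : Q 0 0 = 1 := rfl
      rw [hQ00, one_mul] at h0
      have hc0 : Matrix.cramer Q w 0 = 0 := by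
        rw [h0]
        show Q.det * w 0 = 0
        rw [hw0, mul_zero]
      have hwz : Q.det • w = 0 := by
        rw [← hmv, hc0]
        funext i
        simp
      have hw : w = 0 := by
        rcases smul_eq_zero.mp hwz with h | h
        · exact absurd h hQ
        · exact h
      rw [hwdef] at hw
      exact (sub_eq_zero.mp hw).symm
  -- conclusion
  intro τ hτ hτcard
  have he_mem : ∀ x, τ.orderEmbOfFin hτcard x ∈ τ := fun x => τ.orderEmbOfFin_mem hτcard x
  have he_mono : StrictMono fun x => τ.orderEmbOfFin hτcard x :=
    (τ.orderEmbOfFin hτcard).strictMono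
  rw [LGRCAux.vol_eq_det p hτcard he_mem he_mono, LGRCAux.vol_eq_det q hτcard he_mem he_mono]
  have hcols : LGRCAux.colMat d q (fun x => τ.orderEmbOfFin hτcard x) =
      A * LGRCAux.colMat d p (fun x => τ.orderEmbOfFin hτcard x) := by
    funext i j
    rw [LGRCAux.mul_col]
    have hmem : τ.orderEmbOfFin hτcard j ∈ Finset.Icc 1 n := hτ (he_mem j)
    have hmj := hmain _ hmem
    show LGRCAux.vpoint d q (τ.orderEmbOfFin hτcard j) i = _
    rw [← hmj]
    rfl
  rw [hcols, Matrix.det_mul, hdetA, one_mul]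
end
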